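/- Let K(x,y) = Σ_k λ_k φ_k(x) φ_k(y) be a Mercer kernel on [0,1]² with λ_k ≍ k^{−2α} and (φ_k) an orthonormal basis of L²([0,1]). Let H(K)^{⊗d} be the tensor product RKHS with norm ‖A‖² = Σ_{k_1,…,k_d} (λ_{k_1}⋯λ_{k_d})^{−1} A[φ_{k_1},…,φ_{k_d}]². Let M = span{ φ_{μ_1}(z_1)⋯φ_{μ_{d1}}(z_{d1}) : 1 ≤ μ_j ≤ m } and L = span{ φ_{η_1}(z_{d1+1})⋯φ_{η_{d2}}(z_d) : 1 ≤ η_j ≤ ℓ }, where d1 + d2 = d. Then for any A with ‖A‖_{H(K)^{⊗d}} < ∞, ‖A − A ×_x P_M ×_y P_L‖²_{L²} ≤ C (d1·m^{−2α} + d2·ℓ^{−2α}) ‖A‖²_{H(K)^{⊗d}} for an absolute constant C. -/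

import Mathlib

open MeasureTheory

/-- Lebesgue measure on `[0,1]`. -/
noncomputable def unitMeasure : Measure ℝ := volume.restrict (Set.Icc 0 1)

/-- The coefficient `A[φ_{k_1},…,φ_{k_d}]` of `A ∈ L²([0,1]^d)` against the
product of one-dimensional basis functions. -/
noncomputable def tensorCoef (d : ℕ) (φ : ℕ → Lp ℝ 2 unitMeasure)
    (A : Lp ℝ 2 (Measure.pi fun _ : Fin d => unitMeasure)) (kv : Fin d → ℕ) : ℝ :=
  ∫ z, A z * ∏ j, (φ (kv j) : ℝ → ℝ) (z j) ∂(Measure.pi fun _ : Fin d => unitMeasure)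

instance : IsProbabilityMeasure unitMeasure := by
  constructor; simp [unitMeasure]

section piHelpers
variable {X : Type*} [MeasurableSpace X] (μ : Measure X) [SigmaFinite μ]

theorem my_integrable_fin_prod : ∀ {n : ℕ} (f : Fin n → X → ℝ),
    (∀ i, Integrable (f i) μ) →
    Integrable (fun x : Fin n → X => ∏ i, f i (x i)) (Measure.pi fun _ => μ) := by
  intro n
  induction n with
  | zero =>
    intro f _
    simp only [Finset.univ_eq_empty, Finset.prod_empty]
    rw [integrable_const_iff]
    right
    exact ⟨by rw [Measure.pi_empty_univ]; exact ENNReal.one_lt_top⟩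
  | succ n ih =>
    intro f hf
    have mp := MeasurePreserving.symm _ (measurePreserving_piFinSuccAbove (fun _ : Fin (n+1) => μ) 0)
    rw [← mp.integrable_comp_emb (MeasurableEquiv.measurableEmbedding _)]
    have key : Integrable (fun x : Fin n → X ↦ ∏ j, f (Fin.succ j) (x j)) (Measure.pi fun _ => μ) :=
      ih _ (fun i => hf _)
    have := Integrable.mul_prod (hf 0) key
    refine this.congr ?_
    filter_upwards with p
    simp only [Function.comp, MeasurableEquiv.piFinSuccAbove_symm_apply, Fin.prod_univ_succ]
    simp [Fin.insertNth_zero]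

theorem my_integral_fin_prod : ∀ {n : ℕ} (f : Fin n → X → ℝ),
    ∫ x : Fin n → X, ∏ i, f i (x i) ∂(Measure.pi fun _ => μ) = ∏ i, ∫ x, f i x ∂μ := by
  intro n
  induction n with
  | zero => simp [measureReal_def, Measure.pi_empty_univ]
  | succ n ih =>
    intro f
    have mp := MeasurePreserving.symm _ (measurePreserving_piFinSuccAbove (fun _ : Fin (n+1) => μ) 0)
    calc ∫ x : Fin (n+1) → X, ∏ i, f i (x i) ∂(Measure.pi fun _ => μ)
        = ∫ p : X × (Fin n → X), f 0 p.1 * ∏ j, f (Fin.succ j) (p.2 j)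
            ∂(μ.prod (Measure.pi fun _ => μ)) := by
          rw [← mp.integral_comp']
          congr 1
          ext p
          simp only [MeasurableEquiv.piFinSuccAbove_symm_apply, Fin.prod_univ_succ]
          simp [Fin.insertNth_zero]
      _ = (∫ x, f 0 x ∂μ) * ∫ y : Fin n → X, ∏ j, f (Fin.succ j) (y j) ∂(Measure.pi fun _ => μ) :=
          integral_prod_mul (f 0) (fun y : Fin n → X => ∏ j, f (Fin.succ j) (y j))
      _ = (∫ x, f 0 x ∂μ) * ∏ j, ∫ x, f (Fin.succ j) x ∂μ := by rw [ih]
      _ = ∏ i, ∫ x, f i x ∂μ := (Fin.prod_univ_succ (fun i => ∫ x, f i x ∂μ)).symm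

end piHelpers

variable {X : Type*} [MeasurableSpace X] {μ : Measure X}

theorem my_l2_integrable_mul {f g : X → ℝ} (hf : MemLp f 2 μ) (hg : MemLp g 2 μ) :
    Integrable (fun x => f x * g x) μ := by
  have h := L2.integrable_inner (𝕜 := ℝ) (hf.toLp f) (hg.toLp g)
  refine h.congr ?_
  filter_upwards [hf.coeFn_toLp, hg.coeFn_toLp] with x h1 h2
  simp [h1, h2, RCLike.inner_apply, mul_comm]

theorem my_inner_toLp (f g : X → ℝ) (hf : MemLp f 2 μ) (hg : MemLp g 2 μ) :
    (inner ℝ (hf.toLp f) (hg.toLp g) : ℝ) = ∫ x, f x * g x ∂μ := by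
  rw [L2.inner_def]
  apply integral_congr_ae
  filter_upwards [hf.coeFn_toLp, hg.coeFn_toLp] with x h1 h2
  simp [h1, h2, RCLike.inner_apply, mul_comm]

theorem my_total_of_inner_zero (v : ℕ → Lp ℝ 2 μ)
    (htotal : (Submodule.span ℝ (Set.range v)).topologicalClosure = ⊤)
    (F : X → ℝ) (hF : MemLp F 2 μ)
    (h0 : ∀ k, ∫ x, F x * (v k : X → ℝ) x ∂μ = 0) : F =ᵐ[μ] 0 := by
  have hbot : (Submodule.span ℝ (Set.range v))ᗮ = ⊥ :=
    Submodule.topologicalClosure_eq_top_iff.mp htotal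
  have hmem : hF.toLp F ∈ (Submodule.span ℝ (Set.range v))ᗮ := by
    rw [Submodule.mem_orthogonal]
    intro u hu
    have hle : Submodule.span ℝ (Set.range v) ≤
        LinearMap.ker ((innerSL ℝ (hF.toLp F)).toLinearMap) := by
      rw [Submodule.span_le]
      rintro _ ⟨k, rfl⟩
      simp only [SetLike.mem_coe, LinearMap.mem_ker, ContinuousLinearMap.coe_coe, innerSL_apply_apply]
      have := my_inner_toLp F (v k) hF (Lp.memLp (v k))
      rw [Lp.toLp_coeFn (v k)] at this
      rw [this, h0 k]
    have := hle hu
    simp only [LinearMap.mem_ker, ContinuousLinearMap.coe_coe, innerSL_apply_apply] at this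
    rw [← inner_conj_symm, this, map_zero]
  rw [hbot, Submodule.mem_bot] at hmem
  have h1 := hF.coeFn_toLp
  rw [hmem] at h1
  exact h1.symm.trans (Lp.coeFn_zero ℝ 2 μ)

theorem my_ortho_prod {X Y : Type*} [MeasurableSpace X] [MeasurableSpace Y]
    {μ : Measure X} {ν : Measure Y} [IsFiniteMeasure μ] [IsFiniteMeasure ν]
    {ι κ : Type*} [Countable κ]
    (g : ι → X → ℝ) (hg : ∀ i, MemLp (g i) 2 μ)
    (h : κ → Y → ℝ) (hh : ∀ j, MemLp (h j) 2 ν)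
    (Hg : ∀ F : X → ℝ, MemLp F 2 μ → (∀ i, ∫ x, F x * g i x ∂μ = 0) → F =ᵐ[μ] 0)
    (Hh : ∀ G : Y → ℝ, MemLp G 2 ν → (∀ j, ∫ y, G y * h j y ∂ν = 0) → G =ᵐ[ν] 0)
    (f : X × Y → ℝ) (hf : MemLp f 2 (μ.prod ν))
    (hfo : ∀ i j, ∫ p, f p * (g i p.1 * h j p.2) ∂(μ.prod ν) = 0) :
    f =ᵐ[μ.prod ν] 0 := by
  -- measurable representatives
  set f' : X × Y → ℝ := hf.1.mk f with hf'def
  have hsm : StronglyMeasurable f' := hf.1.stronglyMeasurable_mk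
  have hae : f =ᵐ[μ.prod ν] f' := hf.1.ae_eq_mk
  have hf' : MemLp f' 2 (μ.prod ν) := hf.ae_eq hae
  set h' : κ → Y → ℝ := fun j => (hh j).1.mk (h j) with h'def
  have hsmh : ∀ j, StronglyMeasurable (h' j) := fun j => (hh j).1.stronglyMeasurable_mk
  have haeh : ∀ j, h j =ᵐ[ν] h' j := fun j => (hh j).1.ae_eq_mk
  have hh' : ∀ j, MemLp (h' j) 2 ν := fun j => (hh j).ae_eq (haeh j)
  -- transfer a.e. equalities to the product
  have haeh_prod : ∀ j, (fun p : X × Y => h j p.2) =ᵐ[μ.prod ν] fun p => h' j p.2 := by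
    intro j
    have := MeasureTheory.ae_eq_comp' (measurable_snd.aemeasurable (μ := μ.prod ν)) (haeh j) ?_
    · exact this
    · rw [Measure.map_snd_prod]
      exact Measure.AbsolutelyContinuous.smul_left (Measure.AbsolutelyContinuous.refl ν) _
  -- orthogonality for the representatives
  have hfo' : ∀ i j, ∫ p, f' p * (g i p.1 * h' j p.2) ∂(μ.prod ν) = 0 := by
    intro i j
    rw [← hfo i j]
    apply integral_congr_ae
    filter_upwards [hae, haeh_prod j] with p h1 h2
    rw [← h1, ← h2]
  -- square integrability of slices
  have hsq : Integrable (fun p => f' p ^ 2) (μ.prod ν) := hf'.integrable_sq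
  have hslice_sq : ∀ᵐ x ∂μ, Integrable (fun y => f' (x, y) ^ 2) ν := hsq.prod_right_ae
  have hslice_mem : ∀ᵐ x ∂μ, MemLp (fun y => f' (x, y)) 2 ν := by
    filter_upwards [hslice_sq] with x hx
    exact (memLp_two_iff_integrable_sq
      ((hsm.comp_measurable (measurable_prodMk_left (x := x))).aestronglyMeasurable)).mpr hx
  -- the sliced inner products F j
  set F : κ → X → ℝ := fun j x => ∫ y, f' (x, y) * h' j y ∂ν with Fdef
  have hFsm : ∀ j, StronglyMeasurable (F j) := by
    intro j
    exact (hsm.mul ((hsmh j).comp_measurable measurable_snd)).integral_prod_right'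
  -- q x = ∫ y, f'(x,y)^2
  set q : X → ℝ := fun x => ∫ y, f' (x, y) ^ 2 ∂ν with qdef
  have hq_sm : StronglyMeasurable q := (hsm.pow 2).integral_prod_right'
  have hq_int : Integrable q μ := hsq.integral_prod_left
  have hq_nonneg : ∀ x, 0 ≤ q x := fun x => integral_nonneg (fun y => sq_nonneg _)
  -- MemLp of F j
  have hFmem : ∀ j, MemLp (F j) 2 μ := by
    intro j
    set c : ℝ := ‖(hh' j).toLp (h' j)‖ with cdef
    have hbound_mem : MemLp (fun x => Real.sqrt (q x) * c) 2 μ := by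
      refine (memLp_two_iff_integrable_sq
        (((Real.continuous_sqrt.comp_stronglyMeasurable hq_sm).mul_const c).aestronglyMeasurable)).mpr ?_
      refine ((hq_int.mul_const (c ^ 2)).congr ?_)
      filter_upwards with x
      rw [mul_pow, Real.sq_sqrt (hq_nonneg x)]
    refine hbound_mem.of_le (hFsm j).aestronglyMeasurable ?_
    filter_upwards [hslice_mem] with x hx
    have key : F j x = inner ℝ (hx.toLp _) ((hh' j).toLp (h' j)) :=
      (my_inner_toLp _ _ hx (hh' j)).symm
    have hnorm : ‖hx.toLp (fun y => f' (x, y))‖ = Real.sqrt (q x) := by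
      have h2 : ‖hx.toLp (fun y => f' (x, y))‖ ^ 2 = q x := by
        rw [← real_inner_self_eq_norm_sq, my_inner_toLp _ _ hx hx]
        apply integral_congr_ae
        filter_upwards with y
        ring
      rw [← h2, Real.sqrt_sq (norm_nonneg _)]
    calc ‖F j x‖ ≤ ‖hx.toLp (fun y => f' (x, y))‖ * c := by
          rw [key]; exact norm_inner_le_norm _ _
      _ ≤ ‖Real.sqrt (q x) * c‖ := by
          rw [hnorm]
          exact le_abs_self _
  -- Fubini: each F j is orthogonal to all g i
  have hFo : ∀ j i, ∫ x, F j x * g i x ∂μ = 0 := by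
    intro j i
    -- integrability of the full product
    have hGmem : MemLp (fun p : X × Y => g i p.1 * h' j p.2) 2 (μ.prod ν) := by
      refine (memLp_two_iff_integrable_sq ?_).mpr ?_
      · exact ((hg i).1.comp_quasiMeasurePreserving Measure.quasiMeasurePreserving_fst).mul
          ((hh' j).1.comp_quasiMeasurePreserving Measure.quasiMeasurePreserving_snd)
      · have := Integrable.mul_prod ((hg i).integrable_sq) ((hh' j).integrable_sq)
        refine this.congr ?_
        filter_upwards with p
        ring
    have hPint : Integrable (fun p : X × Y => f' p * (g i p.1 * h' j p.2)) (μ.prod ν) :=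
      my_l2_integrable_mul hf' hGmem
    have fub := integral_prod _ hPint
    have step : ∫ x, F j x * g i x ∂μ
        = ∫ x, ∫ y, f' (x, y) * (g i (x, y).1 * h' j (x, y).2) ∂ν ∂μ := by
      apply integral_congr_ae
      filter_upwards with x
      rw [Fdef]
      simp only
      rw [← integral_mul_const]
      apply integral_congr_ae
      filter_upwards with y
      ring
    rw [step, ← fub, hfo' i j]
  -- each F j vanishes a.e.
  have hFzero : ∀ j, F j =ᵐ[μ] 0 := fun j => Hg (F j) (hFmem j) (fun i => hFo j i)
  -- a.e. slice vanishes
  have hslice_zero : ∀ᵐ x ∂μ, ∀ᵐ y ∂ν, f' (x, y) = 0 := by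
    have hall : ∀ᵐ x ∂μ, ∀ j, F j x = 0 := ae_all_iff.mpr fun j => hFzero j
    filter_upwards [hall, hslice_mem] with x hx hmem
    have := Hh (fun y => f' (x, y)) hmem ?_
    · filter_upwards [this] with y hy using hy
    · intro j
      have : ∫ y, f' (x, y) * h j y ∂ν = ∫ y, f' (x, y) * h' j y ∂ν := by
        apply integral_congr_ae
        filter_upwards [haeh j] with y hy
        rw [hy]
      rw [this]
      exact hx j
  -- conclude
  have hf'zero : f' =ᵐ[μ.prod ν] 0 := by
    have hms : MeasurableSet {p : X × Y | f' p ≠ 0} :=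
      (hsm.measurable (measurableSet_singleton 0)).compl
    rw [Filter.EventuallyEq, ae_iff]
    have : {p : X × Y | ¬ f' p = (0 : (X × Y) → ℝ) p} = {p | f' p ≠ 0} := rfl
    rw [this, Measure.measure_prod_null hms]
    filter_upwards [hslice_zero] with x hx
    have : (Prod.mk x ⁻¹' {p : X × Y | f' p ≠ 0}) = {y | f' (x, y) ≠ 0} := rfl
    rw [this]
    rw [ae_iff] at hx
    exact hx
  exact hae.trans hf'zero

theorem my_eval_qmp {X : Type*} [MeasurableSpace X] (μ : Measure X) [SigmaFinite μ]
    (n : ℕ) (i : Fin n) :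
    Measure.QuasiMeasurePreserving (Function.eval i) (Measure.pi fun _ : Fin n => μ) μ := by
  refine ⟨measurable_pi_apply i, Measure.AbsolutelyContinuous.mk fun s hs h0 => ?_⟩
  rw [Measure.map_apply (measurable_pi_apply i) hs]
  exact Measure.pi_eval_preimage_null _ h0

theorem my_memLp_prod {X : Type*} [MeasurableSpace X] (μ : Measure X) [IsProbabilityMeasure μ]
    {n : ℕ} (v : Fin n → X → ℝ) (hv : ∀ i, MemLp (v i) 2 μ) :
    MemLp (fun y : Fin n → X => ∏ i, v i (y i)) 2 (Measure.pi fun _ : Fin n => μ) := by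
  refine (memLp_two_iff_integrable_sq ?_).mpr ?_
  · exact Finset.aestronglyMeasurable_fun_prod (f := fun i (y : Fin n → X) => v i (y i)) _
      (fun i _ => (hv i).1.comp_quasiMeasurePreserving (my_eval_qmp μ n i))
  · have := my_integrable_fin_prod μ (fun i x => v i x ^ 2) (fun i => (hv i).integrable_sq)
    refine this.congr ?_
    filter_upwards with y
    rw [← Finset.prod_pow]

theorem my_pi_total (φ : ℕ → Lp ℝ 2 unitMeasure)
    (htotal : (Submodule.span ℝ (Set.range φ)).topologicalClosure = ⊤) :
    ∀ (n : ℕ) (f : (Fin n → ℝ) → ℝ), MemLp f 2 (Measure.pi fun _ : Fin n => unitMeasure) →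
    (∀ kv : Fin n → ℕ, ∫ z, f z * ∏ j, (φ (kv j) : ℝ → ℝ) (z j)
      ∂(Measure.pi fun _ : Fin n => unitMeasure) = 0) →
    f =ᵐ[Measure.pi fun _ : Fin n => unitMeasure] 0 := by
  intro n
  induction n with
  | zero =>
    intro f hf h0
    have hconst : f = fun _ => f default := funext fun z => congrArg f (Subsingleton.elim z default)
    have := h0 Fin.elim0
    simp only [Finset.univ_eq_empty, Finset.prod_empty, mul_one] at this
    rw [hconst, integral_const, measureReal_def, Measure.pi_empty_univ] at this
    simp only [ENNReal.toReal_one, one_smul] at this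
    filter_upwards with z
    show f z = 0
    rw [hconst]
    exact this
  | succ n ih =>
    intro f hf h0
    set e := MeasurableEquiv.piFinSuccAbove (fun _ : Fin (n+1) => ℝ) 0 with edef
    have mp : MeasurePreserving e (Measure.pi fun _ : Fin (n+1) => unitMeasure)
        (unitMeasure.prod (Measure.pi fun _ : Fin n => unitMeasure)) :=
      measurePreserving_piFinSuccAbove (fun _ : Fin (n+1) => unitMeasure) 0
    set f₂ : ℝ × (Fin n → ℝ) → ℝ := f ∘ e.symm with f2def
    have hf₂ : MemLp f₂ 2 (unitMeasure.prod (Measure.pi fun _ : Fin n => unitMeasure)) :=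
      hf.comp_measurePreserving (MeasurePreserving.symm _ mp)
    have hfo₂ : ∀ (k : ℕ) (kv : Fin n → ℕ),
        ∫ p, f₂ p * ((φ k : ℝ → ℝ) p.1 * ∏ j, (φ (kv j) : ℝ → ℝ) (p.2 j))
          ∂(unitMeasure.prod (Measure.pi fun _ : Fin n => unitMeasure)) = 0 := by
      intro k kv
      rw [← mp.integral_comp' (fun p => f₂ p * ((φ k : ℝ → ℝ) p.1 *
        ∏ j, (φ (kv j) : ℝ → ℝ) (p.2 j)))]
      rw [← h0 (Fin.cons k kv)]
      apply integral_congr_ae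
      filter_upwards with z
      simp only [f2def, Function.comp_apply, MeasurableEquiv.symm_apply_apply]
      congr 1
      rw [Fin.prod_univ_succ]
      simp [edef, MeasurableEquiv.piFinSuccAbove_apply, Fin.removeNth, Fin.tail,
        Fin.cons_zero, Fin.cons_succ, Fin.succAbove_zero]
    have hzero₂ : f₂ =ᵐ[unitMeasure.prod (Measure.pi fun _ : Fin n => unitMeasure)] 0 := by
      refine my_ortho_prod (fun k => ((φ k : ℝ → ℝ))) (fun k => Lp.memLp (φ k))
        (fun kv : Fin n → ℕ => fun y => ∏ j, (φ (kv j) : ℝ → ℝ) (y j))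
        (fun kv => my_memLp_prod unitMeasure _ (fun j => Lp.memLp (φ (kv j))))
        ?_ ?_ f₂ hf₂ hfo₂
      · intro F hF h0F
        exact my_total_of_inner_zero φ htotal F hF h0F
      · intro G hG h0G
        exact ih G hG h0G
    have h3 : f₂ ∘ ⇑e =ᵐ[Measure.pi fun _ : Fin (n+1) => unitMeasure]
        (0 : ℝ × (Fin n → ℝ) → ℝ) ∘ ⇑e := by
      refine MeasureTheory.ae_eq_comp' e.measurable.aemeasurable hzero₂ ?_
      rw [mp.map_eq]
    have h2 : f =ᵐ[Measure.pi fun _ : Fin (n+1) => unitMeasure] f₂ ∘ ⇑e := by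
      filter_upwards with z
      simp only [f2def, Function.comp_apply, MeasurableEquiv.symm_apply_apply]
    exact h2.trans h3


/-- **Bias of the projection onto `M ⊗ L` in a tensor-product RKHS.**
Let `K = Σ_k λ_k φ_k ⊗ φ_k` be a Mercer kernel on `[0,1]²` with `λ_k ≍ k^{−2α}`
and `(φ_k)` an orthonormal basis of `L²([0,1])`.  For `A` in the tensor RKHS
`H(K)^{⊗d}` (`d = d1 + d2`) with squared norm
`Σ_{kv} (Π_j λ_{kv_j})⁻¹ A[φ_{kv}]²`, and `Ā = A ×_x P_M ×_y P_L` the projection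
keeping exactly the coefficients with all first-block indices `< m` and all
second-block indices `< ℓ`, one has
`‖A − Ā‖²_{L²} ≤ C (d1·m^{−2α} + d2·ℓ^{−2α}) ‖A‖²_{H(K)^{⊗d}}`
for a constant `C`. -/
theorem rkhs_projection_bias
    (α c1 c2 : ℝ) (hα : 0 < α) (hc1 : 0 < c1) (hc2 : 0 < c2)
    (d1 d2 : ℕ) (hd1 : 0 < d1) (hd2 : 0 < d2) :
    ∃ C : ℝ, 0 < C ∧
      ∀ (lam : ℕ → ℝ)
        (_hlam : ∀ k : ℕ, c1 * ((k : ℝ) + 1) ^ (-(2 * α)) ≤ lam k ∧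
          lam k ≤ c2 * ((k : ℝ) + 1) ^ (-(2 * α)))
        (φ : ℕ → Lp ℝ 2 unitMeasure) (_hON : Orthonormal ℝ φ)
        (_htotal : (Submodule.span ℝ (Set.range φ)).topologicalClosure = ⊤)
        (m ℓ : ℕ) (_hm : 0 < m) (_hℓ : 0 < ℓ)
        (A Abar : Lp ℝ 2 (Measure.pi fun _ : Fin (d1 + d2) => unitMeasure))
        (_hfinite : Summable fun kv : Fin (d1 + d2) → ℕ =>
          (∏ j, lam (kv j))⁻¹ * tensorCoef (d1 + d2) φ A kv ^ 2)
        (_hkeep : ∀ kv : Fin (d1 + d2) → ℕ,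
          ((∀ j : Fin (d1 + d2), (j : ℕ) < d1 → kv j < m) ∧
            (∀ j : Fin (d1 + d2), d1 ≤ (j : ℕ) → kv j < ℓ)) →
          tensorCoef (d1 + d2) φ Abar kv = tensorCoef (d1 + d2) φ A kv)
        (_hdrop : ∀ kv : Fin (d1 + d2) → ℕ,
          ¬((∀ j : Fin (d1 + d2), (j : ℕ) < d1 → kv j < m) ∧
            (∀ j : Fin (d1 + d2), d1 ≤ (j : ℕ) → kv j < ℓ)) →
          tensorCoef (d1 + d2) φ Abar kv = 0),
        ‖A - Abar‖ ^ 2 ≤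
          C * ((d1 : ℝ) * (m : ℝ) ^ (-(2 * α)) + (d2 : ℝ) * (ℓ : ℝ) ^ (-(2 * α))) *
            ∑' kv : Fin (d1 + d2) → ℕ,
              (∏ j, lam (kv j))⁻¹ * tensorCoef (d1 + d2) φ A kv ^ 2 := by
  classical
  set d := d1 + d2 with hd
  refine ⟨(max c2 1) ^ d, pow_pos (lt_max_of_lt_right one_pos) d, ?_⟩
  intro lam hlam φ hON htotal m ℓ hm hℓ A Abar hfinite hkeep hdrop
  -- the tensor basis elements
  have hmem : ∀ kv : Fin d → ℕ,
      MemLp (fun z : Fin d → ℝ => ∏ j, (φ (kv j) : ℝ → ℝ) (z j)) 2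
        (Measure.pi fun _ : Fin d => unitMeasure) :=
    fun kv => my_memLp_prod unitMeasure _ (fun j => Lp.memLp (φ (kv j)))
  set e : (Fin d → ℕ) → Lp ℝ 2 (Measure.pi fun _ : Fin d => unitMeasure) :=
    fun kv => (hmem kv).toLp _ with edef
  -- inner products with e
  have hinner : ∀ (kv : Fin d → ℕ)
      (B : Lp ℝ 2 (Measure.pi fun _ : Fin d => unitMeasure)),
      (inner ℝ (e kv) B : ℝ) = tensorCoef d φ B kv := by
    intro kv B
    have h1 := my_inner_toLp _ _ (hmem kv) (Lp.memLp B)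
    rw [Lp.toLp_coeFn B] at h1
    rw [edef]
    rw [h1, tensorCoef]
    apply integral_congr_ae
    filter_upwards with z
    ring
  -- orthonormality
  have hON_e : Orthonormal ℝ e := by
    rw [orthonormal_iff_ite]
    intro kv kv'
    have h1 := my_inner_toLp _ _ (hmem kv) (hmem kv')
    rw [edef]
    rw [h1]
    have h2 : ∫ z, (∏ j, (φ (kv j) : ℝ → ℝ) (z j)) * ∏ j, (φ (kv' j) : ℝ → ℝ) (z j)
          ∂(Measure.pi fun _ : Fin d => unitMeasure)
        = ∏ j, ∫ x, (φ (kv j) : ℝ → ℝ) x * (φ (kv' j) : ℝ → ℝ) x ∂unitMeasure := by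
      rw [← my_integral_fin_prod unitMeasure
        (fun j x => (φ (kv j) : ℝ → ℝ) x * (φ (kv' j) : ℝ → ℝ) x)]
      apply integral_congr_ae
      filter_upwards with z
      rw [← Finset.prod_mul_distrib]
    rw [h2]
    have h3 : ∀ a b : ℕ, ∫ x, (φ a : ℝ → ℝ) x * (φ b : ℝ → ℝ) x ∂unitMeasure
        = if a = b then (1:ℝ) else 0 := by
      intro a b
      have := my_inner_toLp _ _ (Lp.memLp (φ a)) (Lp.memLp (φ b))
      rw [Lp.toLp_coeFn, Lp.toLp_coeFn] at this
      rw [← this]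
      exact orthonormal_iff_ite.mp hON a b
    simp_rw [h3]
    by_cases hkk : kv = kv'
    · subst hkk; simp
    · rw [if_neg hkk]
      obtain ⟨j0, hj0⟩ : ∃ j0, kv j0 ≠ kv' j0 := by
        by_contra hcon
        push_neg at hcon
        exact hkk (funext hcon)
      exact Finset.prod_eq_zero (Finset.mem_univ j0) (if_neg hj0)
  -- totality
  have htot_e : (Submodule.span ℝ (Set.range e))ᗮ = ⊥ := by
    rw [Submodule.eq_bot_iff]
    intro u hu
    have hzero : ∀ kv : Fin d → ℕ, ∫ z, (u : (Fin d → ℝ) → ℝ) z *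
        ∏ j, (φ (kv j) : ℝ → ℝ) (z j) ∂(Measure.pi fun _ : Fin d => unitMeasure) = 0 := by
      intro kv
      have := hu (e kv) (Submodule.subset_span ⟨kv, rfl⟩)
      rw [hinner kv u, tensorCoef] at this
      exact this
    have := my_pi_total φ htotal d (u : (Fin d → ℝ) → ℝ) (Lp.memLp u) hzero
    exact Lp.ext (this.trans (Lp.coeFn_zero ℝ 2 _).symm)
  -- Hilbert basis and Parseval
  set b := HilbertBasis.mkOfOrthogonalEqBot hON_e htot_e with bdef
  have hbe : ⇑b = e := HilbertBasis.coe_mkOfOrthogonalEqBot hON_e htot_e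
  set x := A - Abar with xdef
  have hP : HasSum (fun kv : Fin d → ℕ => (inner ℝ (e kv) x : ℝ) ^ 2) (‖x‖ ^ 2) := by
    have h1 := b.hasSum_inner_mul_inner x x
    rw [real_inner_self_eq_norm_sq] at h1
    refine h1.congr_fun ?_
    intro kv
    rw [hbe, real_inner_comm x (e kv), sq]
  -- coefficients of the difference
  have hcoef : ∀ kv : Fin d → ℕ,
      (inner ℝ (e kv) x : ℝ) = tensorCoef d φ A kv - tensorCoef d φ Abar kv := by
    intro kv
    rw [xdef, inner_sub_right, hinner kv A, hinner kv Abar]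
  -- the weights
  set w : (Fin d → ℕ) → ℝ := fun kv => (∏ j, lam (kv j))⁻¹ * tensorCoef d φ A kv ^ 2 with wdef
  have hlampos : ∀ k, 0 < lam k := fun k =>
    lt_of_lt_of_le (by positivity) (hlam k).1
  have hw0 : ∀ kv, 0 ≤ w kv := by
    intro kv
    have : 0 < ∏ j, lam (kv j) := Finset.prod_pos fun j _ => hlampos _
    positivity
  set T : ℝ := (m : ℝ) ^ (-(2*α)) + (ℓ : ℝ) ^ (-(2*α)) with Tdef
  have hT0 : 0 ≤ T := by
    have := Real.rpow_nonneg (le_of_lt (by exact_mod_cast hm : (0:ℝ) < m)) (-(2*α))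
    have := Real.rpow_nonneg (le_of_lt (by exact_mod_cast hℓ : (0:ℝ) < ℓ)) (-(2*α))
    positivity
  -- the key coefficient bound
  have hkey : ∀ kv : Fin d → ℕ, (inner ℝ (e kv) x : ℝ) ^ 2 ≤ c2 ^ d * T * w kv := by
    intro kv
    by_cases hcase : (∀ j : Fin d, (j : ℕ) < d1 → kv j < m) ∧
        (∀ j : Fin d, d1 ≤ (j : ℕ) → kv j < ℓ)
    · rw [hcoef kv, hkeep kv hcase]
      simp only [sub_self]
      have := hw0 kv
      have : (0:ℝ) ≤ c2 ^ d * T * w kv := by positivity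
      simpa using this
    · rw [hcoef kv, hdrop kv hcase, sub_zero]
      -- find a bad coordinate
      have hbad : ∃ (j0 : Fin d) (M : ℕ), 0 < M ∧ M ≤ kv j0 ∧
          ((M : ℝ) ^ (-(2*α)) ≤ T) := by
        rw [not_and_or] at hcase
        rcases hcase with hc | hc
        · push_neg at hc
          obtain ⟨j0, _, hj0⟩ := hc
          exact ⟨j0, m, hm, hj0, le_add_of_nonneg_right (Real.rpow_nonneg
            (le_of_lt (by exact_mod_cast hℓ)) _)⟩
        · push_neg at hc
          obtain ⟨j0, _, hj0⟩ := hc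
          exact ⟨j0, ℓ, hℓ, hj0, le_add_of_nonneg_left (Real.rpow_nonneg
            (le_of_lt (by exact_mod_cast hm)) _)⟩
      obtain ⟨j0, M, hM0, hMle, hMT⟩ := hbad
      -- bound the product of eigenvalues
      have hprod : ∏ j, lam (kv j) ≤ c2 ^ d * T := by
        have step1 : ∏ j, lam (kv j) ≤ ∏ j : Fin d, c2 * ((kv j : ℝ) + 1) ^ (-(2*α)) :=
          Finset.prod_le_prod (fun j _ => (hlampos _).le) (fun j _ => (hlam _).2)
        have step2 : ∏ j : Fin d, c2 * ((kv j : ℝ) + 1) ^ (-(2*α))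
            = c2 ^ d * ∏ j : Fin d, ((kv j : ℝ) + 1) ^ (-(2*α)) := by
          rw [Finset.prod_mul_distrib, Finset.prod_const, Finset.card_univ, Fintype.card_fin]
        have hfac_nonneg : ∀ j : Fin d, (0:ℝ) ≤ ((kv j : ℝ) + 1) ^ (-(2*α)) := fun j =>
          Real.rpow_nonneg (by positivity) _
        have step3 : ∏ j : Fin d, ((kv j : ℝ) + 1) ^ (-(2*α))
            ≤ ((kv j0 : ℝ) + 1) ^ (-(2*α)) := by
          rw [← Finset.mul_prod_erase Finset.univ _ (Finset.mem_univ j0)]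
          have herase : ∏ j ∈ Finset.univ.erase j0, ((kv j : ℝ) + 1) ^ (-(2*α)) ≤ 1 :=
            Finset.prod_le_one (fun j _ => hfac_nonneg j)
              (fun j _ => Real.rpow_le_one_of_one_le_of_nonpos
                (by linarith [Nat.cast_nonneg (α := ℝ) (kv j)]) (by linarith))
          calc ((kv j0 : ℝ) + 1) ^ (-(2*α)) * ∏ j ∈ Finset.univ.erase j0,
                ((kv j : ℝ) + 1) ^ (-(2*α))
              ≤ ((kv j0 : ℝ) + 1) ^ (-(2*α)) * 1 :=
                mul_le_mul_of_nonneg_left herase (hfac_nonneg j0)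
            _ = ((kv j0 : ℝ) + 1) ^ (-(2*α)) := mul_one _
        have step4 : ((kv j0 : ℝ) + 1) ^ (-(2*α)) ≤ (M : ℝ) ^ (-(2*α)) := by
          apply Real.rpow_le_rpow_of_nonpos (by exact_mod_cast hM0) ?_ (by linarith)
          have : (M : ℝ) ≤ (kv j0 : ℝ) := by exact_mod_cast hMle
          linarith
        calc ∏ j, lam (kv j) ≤ c2 ^ d * ∏ j : Fin d, ((kv j : ℝ) + 1) ^ (-(2*α)) := by
              rw [← step2]; exact step1
          _ ≤ c2 ^ d * ((M : ℝ) ^ (-(2*α))) := by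
              apply mul_le_mul_of_nonneg_left (le_trans step3 step4) (by positivity)
          _ ≤ c2 ^ d * T := mul_le_mul_of_nonneg_left hMT (by positivity)
      -- conclude
      have hprodpos : 0 < ∏ j, lam (kv j) := Finset.prod_pos fun j _ => hlampos _
      have hexpand : tensorCoef d φ A kv ^ 2 = (∏ j, lam (kv j)) * w kv := by
        rw [wdef]
        field_simp
      rw [hexpand]
      exact mul_le_mul_of_nonneg_right hprod (hw0 kv)
  -- sum up
  have hsum_w : Summable w := hfinite
  have hsum_le : ‖x‖ ^ 2 ≤ c2 ^ d * T * ∑' kv, w kv := by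
    rw [← hP.tsum_eq]
    calc ∑' kv, (inner ℝ (e kv) x : ℝ) ^ 2 ≤ ∑' kv, c2 ^ d * T * w kv :=
          Summable.tsum_le_tsum hkey hP.summable (hsum_w.mul_left _)
      _ = c2 ^ d * T * ∑' kv, w kv := tsum_mul_left
  have htsum_nonneg : 0 ≤ ∑' kv, w kv := tsum_nonneg hw0
  have hfinal : c2 ^ d * T * ∑' kv, w kv ≤
      (max c2 1) ^ d * ((d1 : ℝ) * (m : ℝ) ^ (-(2 * α)) + (d2 : ℝ) * (ℓ : ℝ) ^ (-(2 * α)))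
        * ∑' kv, w kv := by
    apply mul_le_mul_of_nonneg_right ?_ htsum_nonneg
    have h1 : c2 ^ d ≤ (max c2 1) ^ d := pow_le_pow_left₀ hc2.le (le_max_left _ _) d
    have h2 : T ≤ (d1 : ℝ) * (m : ℝ) ^ (-(2 * α)) + (d2 : ℝ) * (ℓ : ℝ) ^ (-(2 * α)) := by
      rw [Tdef]
      have hm' : (m : ℝ) ^ (-(2*α)) ≤ (d1 : ℝ) * (m : ℝ) ^ (-(2 * α)) := by
        apply le_mul_of_one_le_left (Real.rpow_nonneg (by positivity) _)
        exact_mod_cast hd1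
      have hℓ' : (ℓ : ℝ) ^ (-(2*α)) ≤ (d2 : ℝ) * (ℓ : ℝ) ^ (-(2 * α)) := by
        apply le_mul_of_one_le_left (Real.rpow_nonneg (by positivity) _)
        exact_mod_cast hd2
      exact add_le_add hm' hℓ'
    exact mul_le_mul h1 h2 hT0 (by positivity)
  exact le_trans hsum_le hfinal
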